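/- Let α = (√5 - 1)/2, g(x) = log(2 - 2cos(2πx)), S_k(α) = ∑_{j=1}^{k} g(jα), and let F_n be the Fibonacci numbers. If the sequence S_{F_n}(α) is bounded, then lim_{n→∞} S_{F_n}(α)/log F_n = 0 and lim_{n→∞} S_{F_n - 1}(α)/log F_n = 2. -/

import Mathlib

open Real Finset Filter

lemma aux_div_tendsto_zero (L T : ℕ → ℝ) (hL : Tendsto L atTop atTop) (C : ℝ)
    (hC : ∀ᶠ n in atTop, |T n| ≤ C) :
    Tendsto (fun n => T n / L n) atTop (nhds 0) := by
  have hLpos : ∀ᶠ n in atTop, 0 < L n := hL.eventually_gt_atTop 0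
  have h0 : Tendsto (fun n => C / L n) atTop (nhds 0) :=
    Tendsto.div_atTop tendsto_const_nhds hL
  refine squeeze_zero_norm' ?_ h0
  filter_upwards [hLpos, hC] with n hn hTn
  rw [Real.norm_eq_abs, abs_div, abs_of_pos hn]
  gcongr

-- key algebraic facts about α
lemma alpha_sq : ((Real.sqrt 5 - 1) / 2) ^ 2 = 1 - (Real.sqrt 5 - 1) / 2 := by
  have h5 : Real.sqrt 5 ^ 2 = 5 := Real.sq_sqrt (by norm_num)
  nlinarith [Real.sqrt_nonneg 5]

lemma alpha_pos : 0 < (Real.sqrt 5 - 1) / 2 := by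
  have h5 : Real.sqrt 5 ^ 2 = 5 := Real.sq_sqrt (by norm_num)
  nlinarith [Real.sqrt_nonneg 5]

lemma alpha_lt_one : (Real.sqrt 5 - 1) / 2 < 1 := by
  have h5 : Real.sqrt 5 ^ 2 = 5 := Real.sq_sqrt (by norm_num)
  nlinarith [Real.sqrt_nonneg 5]

-- fib identity: fib (n+1) * α = fib n - (-α)^(n+1)
lemma fib_mul_alpha (a : ℝ) (ha : a ^ 2 = 1 - a) :
    ∀ n : ℕ, (Nat.fib (n + 1) : ℝ) * a = (Nat.fib n : ℝ) - (-a) ^ (n + 1) := by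
  intro n
  induction n using Nat.twoStepInduction with
  | zero => simp
  | one =>
    simp only [Nat.fib_two, Nat.fib_one, Nat.cast_one]
    ring_nf
    nlinarith [ha]
  | more n ih1 ih2 =>
    have h : (Nat.fib (n + 3) : ℝ) = Nat.fib (n + 2) + Nat.fib (n + 1) := by
      rw [Nat.fib_add_two]; push_cast; ring
    have h2 : (Nat.fib (n + 2) : ℝ) = Nat.fib (n + 1) + Nat.fib n := by
      rw [Nat.fib_add_two]; push_cast; ring
    have hx : (-a) ^ (n + 3) = (-a) ^ (n + 2) + (-a) ^ (n + 1) := by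
      have : (-a) ^ 2 = 1 + -a := by nlinarith [ha]
      calc (-a) ^ (n + 3) = (-a) ^ (n + 1) * ((-a) ^ 2) := by ring
        _ = (-a) ^ (n + 1) * (1 + -a) := by rw [this]
        _ = (-a) ^ (n + 2) + (-a) ^ (n + 1) := by ring
    have ih2' : (Nat.fib (n + 2) : ℝ) * a = (Nat.fib (n + 1) : ℝ) - (-a) ^ (n + 2) := ih2
    rw [h, hx]
    linear_combination ih1 + ih2' - h2

-- fib bounds with φ = 1/a
lemma fib_ub (a : ℝ) (ha : a ^ 2 = 1 - a) (ha0 : 0 < a) :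
    ∀ n : ℕ, (Nat.fib n : ℝ) ≤ (1 / a) ^ n := by
  have hphi : (1 / a) ^ 2 = 1 / a + 1 := by
    field_simp
    nlinarith [ha]
  intro n
  induction n using Nat.twoStepInduction with
  | zero => simp
  | one =>
    simp only [Nat.fib_one, Nat.cast_one, pow_one]
    rw [le_div_iff₀ ha0]; nlinarith
  | more n ih1 ih2 =>
    have h : (Nat.fib (n + 2) : ℝ) = Nat.fib (n + 1) + Nat.fib n := by
      rw [Nat.fib_add_two]; push_cast; ring
    have hx : (1 / a) ^ (n + 2) = (1 / a) ^ (n + 1) + (1 / a) ^ n := by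
      calc (1 / a) ^ (n + 2) = (1 / a) ^ n * ((1 / a) ^ 2) := by ring
        _ = (1 / a) ^ n * (1 / a + 1) := by rw [hphi]
        _ = _ := by ring
    rw [h, hx]; linarith

lemma fib_lb (a : ℝ) (ha : a ^ 2 = 1 - a) (ha0 : 0 < a) (ha1 : a < 1) :
    ∀ n : ℕ, (1 / a) ^ n ≤ (Nat.fib (n + 2) : ℝ) := by
  have hphi : (1 / a) ^ 2 = 1 / a + 1 := by
    field_simp; nlinarith [ha]
  have hphi1 : 1 < 1 / a := (one_lt_div ha0).2 ha1
  intro n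
  induction n using Nat.twoStepInduction with
  | zero => simp
  | one =>
    simp only [pow_one]
    have : (Nat.fib 3 : ℝ) = 2 := by norm_num [Nat.fib]
    rw [this, div_le_iff₀ ha0]
    nlinarith
  | more n ih1 ih2 =>
    have h : (Nat.fib (n + 4) : ℝ) = Nat.fib (n + 3) + Nat.fib (n + 2) := by
      rw [show n + 4 = (n + 2) + 2 by ring, Nat.fib_add_two]; push_cast; ring
    have hx : (1 / a) ^ (n + 2) = (1 / a) ^ (n + 1) + (1 / a) ^ n := by
      calc (1 / a) ^ (n + 2) = (1 / a) ^ n * ((1 / a) ^ 2) := by ring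
        _ = (1 / a) ^ n * (1 / a + 1) := by rw [hphi]
        _ = _ := by ring
    rw [h, hx]; linarith

lemma g_fib_eq (a : ℝ) (ha : a ^ 2 = 1 - a) (ha0 : 0 < a) (ha1 : a < 1) (m : ℕ) :
    Real.log (2 - 2 * Real.cos (2 * π * ((Nat.fib (m + 1) : ℝ) * a))) =
      2 * Real.log (2 * Real.sin (π * a ^ (m + 1))) := by
  have hfib := fib_mul_alpha a ha m
  have hcos : Real.cos (2 * π * ((Nat.fib (m + 1) : ℝ) * a)) = Real.cos (2 * π * a ^ (m + 1)) := by
    rw [hfib]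
    have h1 : 2 * π * ((Nat.fib m : ℝ) - (-a) ^ (m + 1)) =
        (Nat.fib m : ℝ) * (2 * π) - 2 * π * (-a) ^ (m + 1) := by ring
    rw [h1, Real.cos_nat_mul_two_pi_sub]
    rw [← Real.cos_abs (2 * π * (-a) ^ (m + 1)), ← Real.cos_abs (2 * π * a ^ (m + 1))]
    congr 1
    rw [abs_mul, abs_mul, abs_pow, abs_neg, ← abs_pow, ← abs_mul, ← abs_mul]
  rw [hcos]
  have hsinpos : 0 < Real.sin (π * a ^ (m + 1)) := by
    apply Real.sin_pos_of_pos_of_lt_pi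
    · positivity
    · have hpl : a ^ (m + 1) < 1 := pow_lt_one₀ (le_of_lt ha0) ha1 (Nat.succ_ne_zero m)
      nlinarith [mul_pos Real.pi_pos (sub_pos.2 hpl)]
  have hdc : Real.cos (2 * (π * a ^ (m + 1))) = 1 - 2 * Real.sin (π * a ^ (m + 1)) ^ 2 := by
    rw [Real.cos_two_mul]
    nlinarith [Real.sin_sq_add_cos_sq (π * a ^ (m + 1))]
  have h2 : 2 - 2 * Real.cos (2 * π * a ^ (m + 1)) = (2 * Real.sin (π * a ^ (m + 1))) ^ 2 := by
    have : 2 * π * a ^ (m + 1) = 2 * (π * a ^ (m + 1)) := by ring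
    rw [this, hdc]; ring
  rw [h2, Real.log_pow]
  push_cast
  ring

lemma g_fib_bound (a : ℝ) (ha : a ^ 2 = 1 - a) (ha0 : 0 < a) (ha1 : a < 1) (hah : 1 / 2 ≤ a)
    (n : ℕ) (hn : 2 ≤ n) :
    |Real.log (2 - 2 * Real.cos (2 * π * ((Nat.fib n : ℝ) * a))) - 2 * n * Real.log a| ≤
      2 * Real.log (2 * π) := by
  obtain ⟨m, rfl⟩ : ∃ m, n = m + 1 := ⟨n - 1, by omega⟩
  rw [g_fib_eq a ha ha0 ha1 m]
  set x := a ^ (m + 1) with hx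
  have hx0 : 0 < x := pow_pos ha0 _
  have hxhalf : x ≤ 1 / 2 := by
    have h2le : a ^ (m + 1) ≤ a ^ 2 := pow_le_pow_of_le_one (le_of_lt ha0) (le_of_lt ha1) (by omega)
    nlinarith
  have hpix : π * x ≤ π / 2 := by
    nlinarith [Real.pi_pos]
  -- bounds on 2 sin (π x)
  have hub : 2 * Real.sin (π * x) ≤ 2 * π * x := by
    nlinarith [Real.sin_le (by positivity : (0:ℝ) ≤ π * x)]
  have hlb : 4 * x ≤ 2 * Real.sin (π * x) := by
    have hms := Real.mul_le_sin (x := π * x) (by positivity) hpix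
    have h2x : 2 / π * (π * x) = 2 * x := by
      field_simp
    rw [h2x] at hms
    linarith
  have hlog1 : Real.log (4 * x) ≤ Real.log (2 * Real.sin (π * x)) := by
    have h4x : (0:ℝ) < 4 * x := by positivity
    exact Real.log_le_log h4x hlb
  have hlog2 : Real.log (2 * Real.sin (π * x)) ≤ Real.log (2 * π * x) := by
    have : (0:ℝ) < 2 * Real.sin (π * x) := by
      have : 0 < Real.sin (π * x) := Real.sin_pos_of_pos_of_lt_pi (by positivity)
        (by nlinarith [Real.pi_pos])
      linarith
    exact Real.log_le_log this hub
  have e1 : Real.log (4 * x) = Real.log 4 + (m + 1 : ℕ) * Real.log a := by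
    rw [hx, Real.log_mul (by norm_num) (by positivity), Real.log_pow]
  have e2 : Real.log (2 * π * x) = Real.log (2 * π) + (m + 1 : ℕ) * Real.log a := by
    rw [hx, Real.log_mul (by positivity) (by positivity), Real.log_pow]
  rw [e1] at hlog1
  rw [e2] at hlog2
  have hl4 : (0:ℝ) ≤ Real.log 4 := Real.log_nonneg (by norm_num)
  have hl2pi : Real.log 4 ≤ Real.log (2 * π) := by
    apply Real.log_le_log (by norm_num)
    nlinarith [Real.pi_gt_three]
  rw [abs_le]
  constructor <;> push_cast at hlog1 hlog2 ⊢ <;> nlinarith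

lemma log_fib_bound (a : ℝ) (ha : a ^ 2 = 1 - a) (ha0 : 0 < a) (ha1 : a < 1)
    (n : ℕ) (hn : 2 ≤ n) :
    |Real.log (Nat.fib n) + n * Real.log a| ≤ 2 * Real.log (1 / a) := by
  obtain ⟨m, rfl⟩ : ∃ m, n = m + 2 := ⟨n - 2, by omega⟩
  have hub := fib_ub a ha ha0 (m + 2)
  have hlb := fib_lb a ha ha0 ha1 m
  have hfibpos : (0:ℝ) < Nat.fib (m + 2) := by
    have : 0 < Nat.fib (m + 2) := Nat.fib_pos.2 (by omega)
    exact_mod_cast this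
  have hinv1 : (1:ℝ) < 1 / a := (one_lt_div ha0).2 ha1
  have h1 : Real.log ((1 / a) ^ m) ≤ Real.log (Nat.fib (m + 2)) :=
    Real.log_le_log (by positivity) hlb
  have h2 : Real.log (Nat.fib (m + 2)) ≤ Real.log ((1 / a) ^ (m + 2)) :=
    Real.log_le_log hfibpos hub
  rw [Real.log_pow] at h1 h2
  have hla : Real.log (1 / a) = -Real.log a := by
    rw [one_div, Real.log_inv]
  have hl0 : 0 ≤ Real.log (1/a) := Real.log_nonneg (le_of_lt hinv1)
  rw [abs_le]
  constructor <;> push_cast at h1 h2 ⊢ <;> nlinarith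

/-- For the golden mean `α`, `g x = log (2 - 2 cos (2π x))`, Birkhoff sums
`S k = ∑_{j=1}^{k} g (j α)` and the Fibonacci numbers `F n`: if the sequence `S (F n)` is
bounded then `S (F n) / log (F n) → 0` and `S (F n - 1) / log (F n) → 2`. -/
theorem birkhoff_sum_fib_normalized_limits (α : ℝ) (hα : α = (Real.sqrt 5 - 1) / 2)
    (g : ℝ → ℝ) (hg : ∀ x, g x = Real.log (2 - 2 * Real.cos (2 * Real.pi * x)))
    (S : ℕ → ℝ) (hS : ∀ k, S k = ∑ j ∈ Finset.Icc 1 k, g (j * α))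
    (hbdd : ∃ B : ℝ, ∀ n : ℕ, |S (Nat.fib n)| ≤ B) :
    Tendsto (fun n : ℕ => S (Nat.fib n) / Real.log (Nat.fib n)) atTop (nhds 0) ∧
    Tendsto (fun n : ℕ => S (Nat.fib n - 1) / Real.log (Nat.fib n)) atTop (nhds 2) := by
  obtain ⟨B, hB⟩ := hbdd
  have h5 : Real.sqrt 5 ^ 2 = 5 := Real.sq_sqrt (by norm_num)
  have ha2 : α ^ 2 = 1 - α := by rw [hα]; exact alpha_sq
  have ha0 : 0 < α := hα ▸ alpha_pos
  have ha1 : α < 1 := hα ▸ alpha_lt_one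
  have hah : 1 / 2 ≤ α := by
    rw [hα]; nlinarith [Real.sqrt_nonneg 5]
  have hfib_top : Tendsto (fun n : ℕ => (Nat.fib n : ℝ)) atTop atTop := by
    apply tendsto_natCast_atTop_atTop.comp
    exact tendsto_atTop_mono' atTop
      (eventually_atTop.2 ⟨5, fun n hn => Nat.le_fib_self hn⟩) tendsto_id
  have hL : Tendsto (fun n : ℕ => Real.log (Nat.fib n)) atTop atTop :=
    Real.tendsto_log_atTop.comp hfib_top
  have part1 : Tendsto (fun n : ℕ => S (Nat.fib n) / Real.log (Nat.fib n)) atTop (nhds 0) :=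
    aux_div_tendsto_zero _ _ hL B (Eventually.of_forall hB)
  refine ⟨part1, ?_⟩
  set C : ℝ := B + 2 * Real.log (2 * π) + 4 * Real.log (1 / α) with hC
  have hTb : ∀ᶠ n in atTop, |S (Nat.fib n - 1) - 2 * Real.log (Nat.fib n)| ≤ C := by
    filter_upwards [eventually_ge_atTop 5] with n hn
    have h2n : 2 ≤ n := by omega
    have hfib1 : 1 ≤ Nat.fib n := Nat.fib_pos.2 (by omega)
    have hsplit : S (Nat.fib n) = S (Nat.fib n - 1) + g ((Nat.fib n : ℝ) * α) := by
      rw [hS, hS]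
      have h := Finset.sum_Icc_succ_top (a := 1) (b := Nat.fib n - 1) (by omega)
        (fun j : ℕ => g (j * α))
      rw [Nat.sub_add_cancel hfib1] at h
      rw [h]
    have hg1 := g_fib_bound α ha2 ha0 ha1 hah n h2n
    have hlf := log_fib_bound α ha2 ha0 ha1 n h2n
    have hgval : g ((Nat.fib n : ℝ) * α) =
        Real.log (2 - 2 * Real.cos (2 * π * ((Nat.fib n : ℝ) * α))) := hg _
    have hsplit' : S (Nat.fib n - 1) =
        S (Nat.fib n) - Real.log (2 - 2 * Real.cos (2 * π * ((Nat.fib n : ℝ) * α))) := by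
      rw [← hgval]; linarith
    obtain ⟨hg1a, hg1b⟩ := abs_le.1 hg1
    obtain ⟨hlfa, hlfb⟩ := abs_le.1 hlf
    obtain ⟨hBa, hBb⟩ := abs_le.1 (hB n)
    rw [hsplit', hC, abs_le]
    constructor <;> linarith
  have h2 : Tendsto (fun n : ℕ =>
      (S (Nat.fib n - 1) - 2 * Real.log (Nat.fib n)) / Real.log (Nat.fib n)) atTop (nhds 0) :=
    aux_div_tendsto_zero _ _ hL C hTb
  have h3 : Tendsto (fun n : ℕ =>
      (S (Nat.fib n - 1) - 2 * Real.log (Nat.fib n)) / Real.log (Nat.fib n) + 2) atTop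
      (nhds (0 + 2)) := h2.add tendsto_const_nhds
  rw [zero_add] at h3
  refine h3.congr' ?_
  filter_upwards [hL.eventually_gt_atTop 0] with n hLn
  field_simp
  ring
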